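/- Let ∇ be a metric connection with torsion on a Riemannian manifold preserving an orthogonal splitting TM = H ⊕ V, with torsion taking values in V. For a horizontal geodesic γ (i.e., γ̇ ∈ H and ∇_{γ̇}γ̇ = 0) with the property that ⟨R(X,γ̇)γ̇,X⟩ ≤ −K·(|X|²|γ̇|² − ⟨X,γ̇⟩²) for horizontal X with some K ≥ 0, any vector field V along γ satisfying the F-Jacobi equations ∇_{γ̇}V_V + Tor(V,γ̇) = 0 and ∇_{γ̇}∇_{γ̇}V_H + R(V_H,γ̇)γ̇ = 0, with V_H(0) = 0 and V(s) = 0 for some s > 0, must vanish identically on [0,s]. -/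

import Mathlib

open RealInnerProductSpace

/-- No focal points (Lemma 4.2), in a parallel orthonormal trivialization along the
horizontal geodesic: the tangent spaces along `γ` are identified with a fixed inner
product space `E`, the horizontal distribution with a fixed subspace `H`, the velocity
`γ̇` with a fixed horizontal vector `u`, covariant derivative `∇_{γ̇}` with the ordinary
derivative, `R t X = R(X,γ̇)γ̇` is the curvature operator and `T t X = Tor(X,γ̇)` the
(vertical-valued) torsion operator at time `t`.  If the transverse curvature satisfies
`⟨R(X,γ̇)γ̇,X⟩ ≤ −K(|X|²|γ̇|² − ⟨X,γ̇⟩²)` with `K ≥ 0`, then an F-Jacobi field `V = V_H + V_V`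
(solving `∇_{γ̇}V_V + Tor(V,γ̇) = 0` and `∇_{γ̇}∇_{γ̇}V_H + R(V_H,γ̇)γ̇ = 0`) with
`V_H(0) = 0` and `V(s) = 0` for some `s > 0` vanishes identically on `[0,s]`. -/
theorem fJacobi_no_focal_points
    {E : Type*} [NormedAddCommGroup E] [InnerProductSpace ℝ E]
    (H : Submodule ℝ E) (K s : ℝ) (hK : 0 ≤ K) (hs : 0 < s)
    (u : E) (hu : u ∈ H)
    (R : ℝ → E → E) (T : ℝ → E →L[ℝ] E)
    (hTcont : Continuous T)
    (hTvert : ∀ t (X : E), T t X ∈ Hᗮ)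
    (hRhor : ∀ t (X : E), X ∈ H → R t X ∈ H)
    (hcurv : ∀ t ∈ Set.Icc (0 : ℝ) s, ∀ X ∈ H,
      ⟪R t X, X⟫ ≤ -K * (‖X‖ ^ 2 * ‖u‖ ^ 2 - ⟪X, u⟫ ^ 2))
    (VH VV : ℝ → E)
    (hVHmem : ∀ t, VH t ∈ H) (hVVmem : ∀ t, VV t ∈ Hᗮ)
    (hVHsm : ContDiff ℝ 2 VH) (hVVsm : ContDiff ℝ 1 VV)
    (hJac1 : ∀ t ∈ Set.Icc (0 : ℝ) s, deriv VV t + T t (VH t + VV t) = 0)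
    (hJac2 : ∀ t ∈ Set.Icc (0 : ℝ) s, deriv (deriv VH) t + R t (VH t) = 0)
    (hinit : VH 0 = 0) (hendH : VH s = 0) (hendV : VV s = 0) :
    ∀ t ∈ Set.Icc (0 : ℝ) s, VH t = 0 ∧ VV t = 0 := by
  -- differentiability facts
  have hVHd : Differentiable ℝ VH := hVHsm.differentiable (by norm_num)
  have hVH' : ContDiff ℝ 1 (deriv VH) := by
    have h2 : ContDiff ℝ ((1 : WithTop ℕ∞) + 1) VH := by
      rw [one_add_one_eq_two]; exact hVHsm
    exact (contDiff_succ_iff_deriv.mp h2).2.2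
  have hVH'd : Differentiable ℝ (deriv VH) := hVH'.differentiable one_ne_zero
  have hVVd : Differentiable ℝ VV := hVVsm.differentiable one_ne_zero
  -- the function g = ‖VH‖²
  set g : ℝ → ℝ := fun t => ⟪VH t, VH t⟫ with hg
  have hg1 : ∀ t, HasDerivAt g (2 * ⟪deriv VH t, VH t⟫) t := by
    intro t
    have h := (hVHd t).hasDerivAt.inner ℝ (hVHd t).hasDerivAt
    refine h.congr_deriv ?_
    rw [real_inner_comm]; ring
  have hgderiv : deriv g = fun t => 2 * ⟪deriv VH t, VH t⟫ :=
    funext fun t => (hg1 t).deriv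
  have hg2 : ∀ t, HasDerivAt (deriv g)
      (2 * (⟪deriv (deriv VH) t, VH t⟫ + ⟪deriv VH t, deriv VH t⟫)) t := by
    intro t
    rw [hgderiv]
    have h := ((hVH'd t).hasDerivAt.inner ℝ (hVHd t).hasDerivAt).const_mul (2 : ℝ)
    refine h.congr_deriv ?_
    ring
  -- convexity of g on [0,s]
  have hconv : ConvexOn ℝ (Set.Icc 0 s) g := by
    apply convexOn_of_deriv2_nonneg (convex_Icc 0 s)
    · exact (hVHsm.continuous.inner hVHsm.continuous).continuousOn
    · exact fun x _ => ((hg1 x).differentiableAt).differentiableWithinAt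
    · exact fun x _ => ((hg2 x).differentiableAt).differentiableWithinAt
    · intro x hx
      rw [interior_Icc] at hx
      have hxIcc : x ∈ Set.Icc (0 : ℝ) s := Set.mem_Icc_of_Ioo hx
      have hder2 : deriv^[2] g x
          = 2 * (⟪deriv (deriv VH) x, VH x⟫ + ⟪deriv VH x, deriv VH x⟫) := by
        simp only [Function.iterate_succ, Function.iterate_zero, Function.comp_apply, id]
        exact (hg2 x).deriv
      rw [hder2]
      have hdd : deriv (deriv VH) x = -R x (VH x) :=
        eq_neg_of_add_eq_zero_left (hJac2 x hxIcc)
      rw [hdd]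
      have hR := hcurv x hxIcc (VH x) (hVHmem x)
      have hCS : ⟪VH x, u⟫ * ⟪VH x, u⟫ ≤ ⟪VH x, VH x⟫ * ⟪u, u⟫ :=
        real_inner_mul_inner_self_le (VH x) u
      have hnn1 : (0 : ℝ) ≤ ‖VH x‖ ^ 2 * ‖u‖ ^ 2 - ⟪VH x, u⟫ ^ 2 := by
        rw [← real_inner_self_eq_norm_sq, ← real_inner_self_eq_norm_sq]
        nlinarith
      have hnn2 : (0 : ℝ) ≤ ⟪deriv VH x, deriv VH x⟫ := real_inner_self_nonneg
      rw [inner_neg_left]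
      nlinarith
  -- g vanishes on [0, s], hence VH vanishes there
  have hVH0 : ∀ t ∈ Set.Icc (0 : ℝ) s, VH t = 0 := by
    intro t ht
    obtain ⟨ht0, hts⟩ := ht
    have ha : (0 : ℝ) ≤ (s - t) / s := div_nonneg (by linarith) hs.le
    have hb : (0 : ℝ) ≤ t / s := div_nonneg ht0 hs.le
    have hab : (s - t) / s + t / s = 1 := by field_simp; ring
    have hcomb : ((s - t) / s) • (0 : ℝ) + (t / s) • s = t := by
      rw [smul_eq_mul, smul_eq_mul, mul_zero, zero_add]; exact div_mul_cancel₀ t hs.ne'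
    have := hconv.2 (Set.left_mem_Icc.2 hs.le) (Set.right_mem_Icc.2 hs.le) ha hb hab
    rw [hcomb] at this
    have hg0 : g 0 = 0 := by simp [hg, hinit]
    have hgs : g s = 0 := by simp [hg, hendH]
    rw [hg0, hgs] at this
    simp only [smul_eq_mul, mul_zero, add_zero] at this
    have hge : (0 : ℝ) ≤ g t := real_inner_self_nonneg
    have : g t = 0 := le_antisymm this hge
    exact inner_self_eq_zero.mp this
  -- the linear ODE for VV, with a globally Lipschitz right-hand side
  have hcompact : IsCompact (Set.Icc (0 : ℝ) s) := isCompact_Icc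
  obtain ⟨C, hC⟩ := hcompact.exists_bound_of_continuousOn hTcont.continuousOn
  have hC0 : (0 : ℝ) ≤ C := le_trans (norm_nonneg _) (hC 0 (Set.left_mem_Icc.2 hs.le))
  set clamp : ℝ → ℝ := fun t => max 0 (min s t) with hclamp
  have hclampmem : ∀ t, clamp t ∈ Set.Icc (0 : ℝ) s :=
    fun t => ⟨le_max_left _ _, max_le hs.le (min_le_left _ _)⟩
  have hclampid : ∀ t ∈ Set.Icc (0 : ℝ) s, clamp t = t := by
    intro t ht
    simp [hclamp, min_eq_right ht.2, max_eq_right ht.1]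
  set v : ℝ → E → E := fun t x => (-(T (clamp t))) x with hv
  have hlip : ∀ t, LipschitzWith C.toNNReal (v t) := by
    intro t
    refine LipschitzWith.weaken (-(T (clamp t))).lipschitz ?_
    have h := hC (clamp t) (hclampmem t)
    have h2 : ‖-(T (clamp t))‖ ≤ C := by rwa [norm_neg]
    rw [← norm_toNNReal]
    exact Real.toNNReal_le_toNNReal h2
  -- VV solves the ODE x' = v t x backwards from s where it vanishes; so does 0
  have hODE : ∀ t ∈ Set.Ioc (0 : ℝ) s, HasDerivWithinAt VV (v t (VV t)) (Set.Iic t) t := by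
    intro t ht
    have htIcc : t ∈ Set.Icc (0 : ℝ) s := ⟨ht.1.le, ht.2⟩
    have hd : deriv VV t = -T t (VH t + VV t) :=
      eq_neg_of_add_eq_zero_left (hJac1 t htIcc)
    have : deriv VV t = v t (VV t) := by
      rw [hd, hVH0 t htIcc, zero_add, hv]
      simp [hclampid t htIcc]
    rw [← this]
    exact ((hVVd t).hasDerivAt).hasDerivWithinAt
  have hzero : ∀ t ∈ Set.Ioc (0 : ℝ) s,
      HasDerivWithinAt (fun _ : ℝ => (0 : E)) (v t 0) (Set.Iic t) t := by
    intro t ht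
    have : v t (0 : E) = 0 := (-(T (clamp t))).map_zero
    rw [this]
    exact (hasDerivWithinAt_const _ _ _)
  have huniq := ODE_solution_unique_of_mem_Icc_left
    (fun t _ => (hlip t).lipschitzOnWith (s := Set.univ))
    (hVVsm.continuous.continuousOn)
    hODE (fun _ _ => Set.mem_univ _)
    (continuousOn_const)
    hzero (fun _ _ => Set.mem_univ _)
    (by simpa using hendV)
  intro t ht
  exact ⟨hVH0 t ht, huniq ht⟩
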